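/- Theorem 1 (total access bound). Let C be an (n,k,l) MDS linear array code over a finite field F and let P be an hl × nl matrix over F whose rows lie in C^⊥, where 1 ≤ h ≤ min{u, s̄u − v}, such that: (i) rank [P_{j'_1},…,P_{j'_h}] = hl for distinct failed nodes j'_b = e'u + g'_b in a host rack e'; (ii) there is a set R ⊆ {0,…,n̄−1}∖{e'} with |R| = d̄ such that P̄_e = 0 for every e ∉ R ∪ {e'}; and (iii) s̄ · rank P̄_e = hl for every e ∈ R. Then the total number of accessed symbols satisfies s̄(u−v) · ∑_{e∈R} acs(P̄_e) ≥ h·d̄·u·l. -/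

import Mathlib

open Module Submodule Finset Matrix

/-- finrank of the span of the range of a family which vanishes off a finset `s`
is at most `s.card`. -/
private lemma aux_finrank_span_range_le {F V ι : Type*} [Field F] [AddCommGroup V] [Module F V]
    [Fintype ι] (f : ι → V) (s : Finset ι) (hs : ∀ j, j ∉ s → f j = 0) :
    finrank F (span F (Set.range f)) ≤ s.card := by
  classical
  have hle : span F (Set.range f) ≤ span F ((s.image f : Finset V) : Set V) := by
    rw [Submodule.span_le]
    rintro w ⟨j, rfl⟩
    by_cases hj : j ∈ s
    · refine Submodule.subset_span ?_
      simp only [Finset.coe_image, Set.mem_image, Finset.mem_coe]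
      exact ⟨j, hj, rfl⟩
    · rw [hs j hj]
      exact Submodule.zero_mem _
  have h2 : finrank F (span F ((s.image f : Finset V) : Set V)) ≤ (s.image f).card := by
    simpa [Set.finrank] using finrank_span_finset_le_card (s.image f)
  calc finrank F (span F (Set.range f))
      ≤ finrank F (span F ((s.image f : Finset V) : Set V)) := Submodule.finrank_mono hle
    _ ≤ (s.image f).card := h2
    _ ≤ s.card := Finset.card_image_le

private lemma aux_finrank_biSup_le {F V ι : Type*} [Field F] [AddCommGroup V] [Module F V]
    [FiniteDimensional F V] (T : Finset ι) (W : ι → Submodule F V) :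
    finrank F (⨆ i ∈ T, W i : Submodule F V) ≤ ∑ i ∈ T, finrank F (W i) := by
  classical
  induction T using Finset.induction_on with
  | empty => simp
  | insert _ _ ha ih =>
    rename_i a s
    rw [Finset.iSup_insert, Finset.sum_insert ha]
    have h := Submodule.finrank_sup_add_finrank_inf_eq (W a) (⨆ i ∈ s, W i)
    omega

private lemma aux_exists_ann {F : Type*} [Field F] {N : ℕ} (W : Submodule F (Fin N → F))
    (hW : finrank F W < N) :
    ∃ x : Fin N → F, x ≠ 0 ∧ ∀ w ∈ W, ∑ ρ, x ρ * w ρ = 0 := by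
  classical
  let Φ : (Fin N → F) →ₗ[F] (W →ₗ[F] F) :=
    { toFun := fun x =>
        { toFun := fun w => ∑ ρ, x ρ * (w : Fin N → F) ρ
          map_add' := fun w₁ w₂ => by
            simp [mul_add, Finset.sum_add_distrib]
          map_smul' := fun a w => by
            simp [Finset.mul_sum, mul_left_comm] }
      map_add' := fun x₁ x₂ => by
        ext w; simp [add_mul, Finset.sum_add_distrib]
      map_smul' := fun a x => by
        ext w; simp [Finset.mul_sum, mul_assoc] }
  have h1 : finrank F (LinearMap.range Φ) ≤ finrank F W := by
    have := Submodule.finrank_le (LinearMap.range Φ)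
    have hd : finrank F (W →ₗ[F] F) = finrank F W := Subspace.dual_finrank_eq
    omega
  have h2 := LinearMap.finrank_range_add_finrank_ker Φ
  have h3 : finrank F (Fin N → F) = N := by
    rw [Module.finrank_pi, Fintype.card_fin]
  have hker : LinearMap.ker Φ ≠ ⊥ := by
    intro hbot
    rw [hbot, finrank_bot] at h2
    omega
  obtain ⟨x, hxker, hxne⟩ := (Submodule.ne_bot_iff _).mp hker
  refine ⟨x, hxne, fun w hw => ?_⟩
  have hx0 : Φ x = 0 := LinearMap.mem_ker.mp hxker
  have := DFunLike.congr_fun hx0 (⟨w, hw⟩ : W)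
  simpa [Φ] using this

private lemma aux_card_window {u v : ℕ} (hu : 0 < u) (hv : v < u) (f : Fin u → ZMod u)
    (hf : Function.Injective f) :
    (Finset.univ.filter fun z : Fin u => (f z).val < v).card = v := by
  classical
  haveI : NeZero u := ⟨hu.ne'⟩
  have hcard : Fintype.card (Fin u) = Fintype.card (ZMod u) := by simp [ZMod.card]
  have hfs : Function.Surjective f :=
    ((Fintype.bijective_iff_injective_and_card f).mpr ⟨hf, hcard⟩).2
  have : (Finset.univ.filter fun z : Fin u => (f z).val < v).card
      = (Finset.univ : Finset (Fin v)).card := by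
    refine Finset.card_bij' (fun z hz => ⟨(f z).val, by simpa using hz⟩)
      (fun s _ => Function.surjInv hfs ((s : ℕ) : ZMod u)) ?_ ?_ ?_ ?_
    · intro a ha; exact Finset.mem_univ _
    · intro s _
      have hval : (f (Function.surjInv hfs ((s : ℕ) : ZMod u))).val = (s : ℕ) := by
        rw [Function.surjInv_eq hfs]
        exact ZMod.val_cast_of_lt (lt_trans s.isLt hv)
      simp [hval, lt_trans s.isLt hv, s.isLt]
    · intro z hz
      apply hf
      rw [Function.surjInv_eq hfs]
      exact ZMod.natCast_rightInverse (f z)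
    · intro s _
      ext
      simp only
      rw [Function.surjInv_eq hfs]
      exact ZMod.val_cast_of_lt (lt_trans s.isLt hv)
  simpa using this

set_option maxHeartbeats 2000000 in
theorem total_access_bound
    (F : Type*) [Field F] [Fintype F] [DecidableEq F]
    (u nb kb v db sb l h : ℕ)
    (hu : 1 < u) (hkb : 1 ≤ kb) (hnb : kb < nb) (hv : v < u)
    (hdb1 : kb ≤ db) (hdb2 : db ≤ nb - 1) (hsb : sb = db - kb + 1)
    (hh1 : 1 ≤ h) (hh2 : h ≤ u) (hh3 : h + v ≤ sb * u)
    (C : Submodule F ((Fin nb × Fin u) → Fin l → F))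
    (hdim : Module.finrank F C = (kb * u + v) * l)
    (hMDS : ∀ c ∈ C, ∀ S : Finset (Fin nb × Fin u), S.card = kb * u + v →
      (∀ j ∈ S, c j = 0) → c = 0)
    (P : Matrix (Fin (h * l)) ((Fin nb × Fin u) × Fin l) F)
    (hdual : ∀ ρ : Fin (h * l), ∀ c ∈ C,
      ∑ j : Fin nb × Fin u, ∑ i : Fin l, P ρ (j, i) * c j i = 0)
    (e' : Fin nb) (g' : Fin h → Fin u) (hg' : Function.Injective g')
    (hrank1 : (Matrix.of fun ρ (bi : Fin h × Fin l) =>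
      P ρ ((e', g' bi.1), bi.2)).rank = h * l)
    (R : Finset (Fin nb)) (hR : R.card = db) (he'R : e' ∉ R)
    (hzero : ∀ e : Fin nb, e ∉ R → e ≠ e' → ∀ ρ g i, P ρ ((e, g), i) = 0)
    (hrankR : ∀ e ∈ R,
      sb * (Matrix.of fun ρ (gi : Fin u × Fin l) =>
        P ρ ((e, gi.1), gi.2)).rank = h * l) :
    h * (db * (u * l)) ≤ sb * (u - v) *
      ∑ e ∈ R, (Finset.univ.filter (fun gi : Fin u × Fin l =>
        ∃ ρ, P ρ ((e, gi.1), gi.2) ≠ 0)).card := by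
  classical
  haveI : NeZero u := ⟨by omega⟩
  -- STEP A : support lemma (dual minimum distance)
  have hsupport : ∀ y : (Fin nb × Fin u) → Fin l → F,
      (∀ c ∈ C, ∑ j : Fin nb × Fin u, ∑ i : Fin l, y j i * c j i = 0) →
      ∀ S : Finset (Fin nb × Fin u), S.card ≤ kb * u + v →
      (∀ j ∉ S, y j = 0) → y = 0 := by
    intro y hy S hScard hSsupp
    have hge : kb * u + v ≤ Fintype.card (Fin nb × Fin u) := by
      have h1 : kb * u + v ≤ (kb + 1) * u := by
        have : kb * u + v ≤ kb * u + u := by omega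
        calc kb * u + v ≤ kb * u + u := this
          _ = (kb + 1) * u := by ring
      have h2 : (kb + 1) * u ≤ nb * u := Nat.mul_le_mul_right u hnb
      have h3 : Fintype.card (Fin nb × Fin u) = nb * u := by
        simp [Fintype.card_prod, Fintype.card_fin]
      rw [h3]
      exact le_trans h1 h2
    obtain ⟨S', hSS', hS'card⟩ := Finset.exists_superset_card_eq hScard hge
    -- projection map onto coordinates in S'
    let f : C →ₗ[F] ({ j // j ∈ S' } → Fin l → F) :=
      { toFun := fun c => fun j => (c : (Fin nb × Fin u) → Fin l → F) j.1
        map_add' := fun c₁ c₂ => rfl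
        map_smul' := fun a c => rfl }
    have finj : Function.Injective f := by
      intro c₁ c₂ heq
      have hmem : ((c₁ : (Fin nb × Fin u) → Fin l → F) - c₂) ∈ C := sub_mem c₁.2 c₂.2
      have hz : ((c₁ : (Fin nb × Fin u) → Fin l → F) - c₂) = 0 := by
        refine hMDS _ hmem S' hS'card ?_
        intro j hj
        have := congrFun heq (⟨j, hj⟩ : { j // j ∈ S' })
        simp only [f, LinearMap.coe_mk, AddHom.coe_mk] at this
        funext i
        simp [Pi.sub_apply, this]
      apply Subtype.ext
      have := sub_eq_zero.mp hz
      exact this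
    have hsurj : Function.Surjective f := by
      have hrange : LinearMap.range f = ⊤ := by
        apply Submodule.eq_top_of_finrank_eq
        rw [LinearMap.finrank_range_of_inj finj, hdim]
        rw [Module.finrank_pi_fintype]
        simp only [Module.finrank_pi, Fintype.card_fin, Finset.sum_const, smul_eq_mul]
        rw [Finset.card_univ, Fintype.card_coe, hS'card]
      intro w
      have : w ∈ LinearMap.range f := by rw [hrange]; trivial
      exact this
    funext j i
    by_cases hj : j ∈ S'
    · -- use surjectivity with an indicator vector
      obtain ⟨c, hc⟩ := hsurj (fun j' i' =>
        (if (j' : Fin nb × Fin u) = j then (1 : F) else 0) * (if i' = i then 1 else 0))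
      have h0 := hy (c : (Fin nb × Fin u) → Fin l → F) c.2
      have hstep : ∑ j' ∈ S', ∑ i' : Fin l,
          y j' i' * (c : (Fin nb × Fin u) → Fin l → F) j' i' = 0 := by
        rw [Finset.sum_subset (Finset.subset_univ S')]
        · exact h0
        · intro j' _ hj'
          have : y j' = 0 := hSsupp j' (fun hmem => hj' (hSS' hmem))
          simp [this]
      have hcval : ∀ j' (hj' : j' ∈ S') (i' : Fin l),
          (c : (Fin nb × Fin u) → Fin l → F) j' i' =
            (if j' = j then (1 : F) else 0) * (if i' = i then 1 else 0) := by
        intro j' hj' i'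
        have := congrFun (congrFun hc (⟨j', hj'⟩ : { j // j ∈ S' })) i'
        simpa [f] using this
      have hstep2 : ∑ j' ∈ S', (if j' = j then y j' i else 0) = 0 := by
        refine Eq.trans ?_ hstep
        refine Finset.sum_congr rfl (fun j' hj' => ?_)
        have hrow : ∑ i' : Fin l, y j' i' * (c : (Fin nb × Fin u) → Fin l → F) j' i'
            = ∑ i' : Fin l, y j' i' *
              ((if j' = j then (1 : F) else 0) * (if i' = i then 1 else 0)) :=
          Finset.sum_congr rfl (fun i' _ => by rw [hcval j' hj' i'])
        rw [hrow]
        by_cases hjj : j' = j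
        · subst hjj
          simp [mul_ite, mul_one, mul_zero]
        · simp [hjj]
      rw [Finset.sum_ite_eq' S' j (fun j' => y j' i)] at hstep2
      simpa [hj] using hstep2
    · have : y j = 0 := hSsupp j (fun hmem => hj (hSS' hmem))
      simp [this]
  -- STEP B : rows of P are linearly independent (left kernel trivial)
  have hleft : ∀ x : Fin (h * l) → F,
      (∀ (b : Fin h) (i : Fin l), ∑ ρ, x ρ * P ρ ((e', g' b), i) = 0) → x = 0 := by
    intro x hx
    set M : Matrix (Fin (h * l)) (Fin h × Fin l) F :=
      Matrix.of fun ρ (bi : Fin h × Fin l) => P ρ ((e', g' bi.1), bi.2) with hM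
    have hMv : Mᵀ.mulVec x = 0 := by
      funext bi
      show (∑ ρ, Mᵀ bi ρ * x ρ) = (0 : F)
      calc (∑ ρ, Mᵀ bi ρ * x ρ) = ∑ ρ, x ρ * P ρ ((e', g' bi.1), bi.2) :=
            Finset.sum_congr rfl (fun ρ _ => by
              rw [Matrix.transpose_apply, mul_comm]
              rfl)
        _ = 0 := hx bi.1 bi.2
    have hrk : Mᵀ.rank = h * l := by rw [Matrix.rank_transpose]; exact hrank1
    have h2 := LinearMap.finrank_range_add_finrank_ker Mᵀ.mulVecLin
    have h3 : finrank F (Fin (h * l) → F) = h * l := by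
      rw [Module.finrank_pi, Fintype.card_fin]
    have h4 : finrank F (LinearMap.range Mᵀ.mulVecLin) = h * l := hrk
    have h5 : finrank F (LinearMap.ker Mᵀ.mulVecLin) = 0 := by omega
    have h6 : LinearMap.ker Mᵀ.mulVecLin = ⊥ := Submodule.finrank_eq_zero.mp h5
    have hxker : x ∈ LinearMap.ker Mᵀ.mulVecLin := by
      rw [LinearMap.mem_ker, Matrix.mulVecLin_apply, hMv]
    rw [h6] at hxker
    simpa using hxker
  -- STEP C : per-rack inequality
  have hmain : ∀ e ∈ R, u * (h * l) ≤ sb * (u - v) *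
      (Finset.univ.filter (fun gi : Fin u × Fin l =>
        ∃ ρ, P ρ ((e, gi.1), gi.2) ≠ 0)).card := by
    intro e he
    set Pe : Matrix (Fin (h * l)) (Fin u × Fin l) F :=
      Matrix.of fun ρ (gi : Fin u × Fin l) => P ρ ((e, gi.1), gi.2) with hPe
    set ρe : ℕ := Pe.rank with hρedef
    have hρe : sb * ρe = h * l := hrankR e he
    have hsb1 : 1 ≤ sb := by omega
    set cols : (Fin u × Fin l) → (Fin (h * l) → F) := Pe.transpose with hcols
    have hfullrank : ρe = finrank F (span F (Set.range cols)) :=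
      Matrix.rank_eq_finrank_span_cols Pe
    set Ae : Finset (Fin u × Fin l) := Finset.univ.filter (fun gi : Fin u × Fin l =>
        ∃ ρ, P ρ ((e, gi.1), gi.2) ≠ 0) with hAe
    -- the window construction
    have hwindow : ∀ t : Fin u, ρe ≤
        (Ae.filter (fun gi : Fin u × Fin l =>
          ¬ ((((gi.1 : ℕ) : ZMod u) - ((t : ℕ) : ZMod u)).val < v))).card := by
      intro t
      set Gt : Finset (Fin u) := Finset.univ.filter (fun g : Fin u =>
        ¬ ((((g : ℕ) : ZMod u) - ((t : ℕ) : ZMod u)).val < v)) with hGt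
      set st : Finset (Fin u × Fin l) :=
        Ae.filter (fun gi : Fin u × Fin l => gi.1 ∈ Gt) with hst
      set colsN : (Fin u × Fin l) → (Fin (h * l) → F) :=
        fun gi => if gi.1 ∈ Gt then cols gi else 0 with hcolsN
      have hNle : span F (Set.range colsN) ≤ span F (Set.range cols) := by
        rw [Submodule.span_le]
        rintro w ⟨gi, rfl⟩
        by_cases hg : gi.1 ∈ Gt
        · simp only [colsN, hg, if_true]
          exact Submodule.subset_span ⟨gi, rfl⟩
        · simp only [colsN, hg, if_false]
          exact Submodule.zero_mem _
      -- the key claim: the spans agree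
      have hspan : span F (Set.range colsN) = span F (Set.range cols) := by
        by_contra hne
        have hlt : span F (Set.range colsN) < span F (Set.range cols) :=
          lt_of_le_of_ne hNle hne
        have hfr : finrank F (span F (Set.range colsN)) < ρe := by
          rw [hfullrank]
          exact Submodule.finrank_lt_finrank_of_lt hlt
        have hρe1 : 1 ≤ ρe := by omega
        -- choose sb - 1 other racks
        have hcardT : sb - 1 ≤ (R.erase e).card := by
          rw [Finset.card_erase_of_mem he, hR]; omega
        obtain ⟨T, hTsub, hTcard⟩ := Finset.exists_subset_card_eq hcardT
        -- the forbidden subspace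
        set W : Submodule F (Fin (h * l) → F) :=
          span F (Set.range colsN) ⊔ ⨆ e'' ∈ T, span F (Set.range
            (Matrix.of fun ρ (gi : Fin u × Fin l) => P ρ ((e'', gi.1), gi.2)).transpose)
          with hW
        have hWfr : finrank F W < h * l := by
          have hsup := Submodule.finrank_sup_add_finrank_inf_eq
            (span F (Set.range colsN)) (⨆ e'' ∈ T, span F (Set.range
              (Matrix.of fun ρ (gi : Fin u × Fin l) => P ρ ((e'', gi.1), gi.2)).transpose))
          have hbi := aux_finrank_biSup_le T (fun e'' => span F (Set.range
            (Matrix.of fun ρ (gi : Fin u × Fin l) => P ρ ((e'', gi.1), gi.2)).transpose))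
          have hrackrk : ∀ e'' ∈ T, finrank F (span F (Set.range
              (Matrix.of fun ρ (gi : Fin u × Fin l) => P ρ ((e'', gi.1), gi.2)).transpose)) = ρe := by
            intro e'' he''T
            have he''R : e'' ∈ R := Finset.mem_of_mem_erase (hTsub he''T)
            have h1 := hrankR e'' he''R
            rw [Matrix.rank_eq_finrank_span_cols] at h1
            have : sb * ρe = sb * finrank F (span F (Set.range
              (Matrix.of fun ρ (gi : Fin u × Fin l) => P ρ ((e'', gi.1), gi.2)).transpose)) := by
              rw [hρe]; exact h1.symm
            exact (Nat.eq_of_mul_eq_mul_left (by omega) this).symm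
          have hsum : ∑ e'' ∈ T, finrank F (span F (Set.range
              (Matrix.of fun ρ (gi : Fin u × Fin l) => P ρ ((e'', gi.1), gi.2)).transpose))
              = (sb - 1) * ρe := by
            rw [Finset.sum_congr rfl hrackrk, Finset.sum_const, hTcard, smul_eq_mul]
          have hkey : finrank F W ≤ (ρe - 1) + (sb - 1) * ρe := by
            have : finrank F W ≤ finrank F (span F (Set.range colsN)) +
                finrank F (⨆ e'' ∈ T, span F (Set.range
                  (Matrix.of fun ρ (gi : Fin u × Fin l) => P ρ ((e'', gi.1), gi.2)).transpose) :
                  Submodule F (Fin (h * l) → F)) := by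
              rw [hW]; omega
            have h2 : finrank F (⨆ e'' ∈ T, span F (Set.range
                  (Matrix.of fun ρ (gi : Fin u × Fin l) => P ρ ((e'', gi.1), gi.2)).transpose) :
                  Submodule F (Fin (h * l) → F)) ≤ (sb - 1) * ρe := by
              rw [← hsum]; exact hbi
            omega
          have harith : (ρe - 1) + (sb - 1) * ρe < h * l := by
            have h1 : (sb - 1) * ρe = sb * ρe - ρe := by
              rw [Nat.sub_mul, one_mul]
            rw [h1, hρe]
            have h2 : ρe ≤ h * l := by
              calc ρe = 1 * ρe := (one_mul ρe).symm
                _ ≤ sb * ρe := Nat.mul_le_mul_right ρe hsb1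
                _ = h * l := hρe
            omega
          omega
        obtain ⟨x, hxne, hxann⟩ := aux_exists_ann W hWfr
        -- build the dual codeword y
        set y : (Fin nb × Fin u) → Fin l → F :=
          fun j i => ∑ ρ, x ρ * P ρ (j, i) with hy
        have hyC : ∀ c ∈ C, ∑ j : Fin nb × Fin u, ∑ i : Fin l, y j i * c j i = 0 := by
          intro c hc
          calc ∑ j : Fin nb × Fin u, ∑ i : Fin l, y j i * c j i
              = ∑ j : Fin nb × Fin u, ∑ i : Fin l, ∑ ρ, x ρ * P ρ (j, i) * c j i := by
                refine Finset.sum_congr rfl fun j _ => Finset.sum_congr rfl fun i _ => ?_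
                simp only [hy]
                rw [Finset.sum_mul]
            _ = ∑ j : Fin nb × Fin u, ∑ ρ, ∑ i : Fin l, x ρ * P ρ (j, i) * c j i := by
                exact Finset.sum_congr rfl fun j _ => Finset.sum_comm
            _ = ∑ ρ, ∑ j : Fin nb × Fin u, ∑ i : Fin l, x ρ * P ρ (j, i) * c j i :=
                Finset.sum_comm
            _ = ∑ ρ, x ρ * ∑ j : Fin nb × Fin u, ∑ i : Fin l, P ρ (j, i) * c j i := by
                refine Finset.sum_congr rfl fun ρ _ => ?_
                rw [Finset.mul_sum]
                refine Finset.sum_congr rfl fun j _ => ?_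
                rw [Finset.mul_sum]
                refine Finset.sum_congr rfl fun i _ => ?_
                ring
            _ = 0 := Finset.sum_eq_zero fun ρ _ => by rw [hdual ρ c hc, mul_zero]
        -- support set
        set Dt : Finset (Fin u) := Finset.univ.filter (fun g : Fin u =>
          (((g : ℕ) : ZMod u) - ((t : ℕ) : ZMod u)).val < v) with hDt
        have hDtcard : Dt.card = v := by
          apply aux_card_window (by omega) hv
          intro z₁ z₂ hz
          have h1 : ((z₁ : ℕ) : ZMod u) = ((z₂ : ℕ) : ZMod u) := sub_left_inj.mp hz
          have hval := congrArg ZMod.val h1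
          rw [ZMod.val_cast_of_lt z₁.isLt, ZMod.val_cast_of_lt z₂.isLt] at hval
          exact Fin.ext hval
        set S : Finset (Fin nb × Fin u) :=
          ((insert e' (R \ insert e T)) ×ˢ (Finset.univ : Finset (Fin u))) ∪
            (Dt.image (fun g => (e, g))) with hS
        have hScard : S.card ≤ kb * u + v := by
          have hinsTsub : insert e T ⊆ R := by
            intro a ha
            rcases Finset.mem_insert.mp ha with rfl | haT
            · exact he
            · exact Finset.mem_of_mem_erase (hTsub haT)
          have heT : e ∉ T := fun heT => (Finset.notMem_erase e R) (hTsub heT)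
          have hc1 : (R \ insert e T).card = db - sb := by
            rw [Finset.card_sdiff_of_subset hinsTsub, hR, Finset.card_insert_of_notMem heT, hTcard]
            omega
          have he'ni : e' ∉ R \ insert e T := fun hmem =>
            he'R (Finset.mem_sdiff.mp hmem).1
          have hc2 : (insert e' (R \ insert e T)).card = db - sb + 1 := by
            rw [Finset.card_insert_of_notMem he'ni, hc1]
          calc S.card ≤ ((insert e' (R \ insert e T)) ×ˢ (Finset.univ : Finset (Fin u))).card
                + (Dt.image (fun g => (e, g))).card := Finset.card_union_le _ _
            _ ≤ (db - sb + 1) * u + v := by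
                have h1 : ((insert e' (R \ insert e T)) ×ˢ
                    (Finset.univ : Finset (Fin u))).card = (db - sb + 1) * u := by
                  rw [Finset.card_product, hc2, Finset.card_univ, Fintype.card_fin]
                have h2 : (Dt.image (fun g => (e, g))).card ≤ v := by
                  calc (Dt.image (fun g => (e, g))).card ≤ Dt.card := Finset.card_image_le
                    _ = v := hDtcard
                omega
            _ = kb * u + v := by
                have : db - sb + 1 = kb := by omega
                rw [this]
        have hysupp : ∀ j ∉ S, y j = 0 := by
          rintro ⟨e₂, g⟩ hj
          by_cases hmem : e₂ ∈ insert e' (R \ insert e T)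
          · exfalso
            apply hj
            rw [hS]
            apply Finset.mem_union_left
            exact Finset.mem_product.mpr ⟨hmem, Finset.mem_univ g⟩
          · -- e₂ ∉ insert e' (R \ insert e T)
            have he₂ne' : e₂ ≠ e' := fun hEq => hmem (by rw [hEq]; exact Finset.mem_insert_self _ _)
            by_cases he₂R : e₂ ∈ R
            · have he₂mem : e₂ ∈ insert e T := by
                by_contra hnot
                exact hmem (Finset.mem_insert_of_mem (Finset.mem_sdiff.mpr ⟨he₂R, hnot⟩))
              rcases Finset.mem_insert.mp he₂mem with rfl | he₂T
              · -- e₂ = e : the host of the current claim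
                by_cases hgD : g ∈ Dt
                · exfalso
                  apply hj
                  rw [hS]
                  apply Finset.mem_union_right
                  exact Finset.mem_image.mpr ⟨g, hgD, rfl⟩
                · -- g ∈ Gt : the column lies in span colsN ≤ W
                  have hgG : g ∈ Gt := by
                    rw [hGt, Finset.mem_filter]
                    refine ⟨Finset.mem_univ g, ?_⟩
                    intro hlt
                    exact hgD (by rw [hDt, Finset.mem_filter]; exact ⟨Finset.mem_univ g, hlt⟩)
                  funext i
                  have hcolmem : cols (g, i) ∈ W := by
                    have h1 : colsN (g, i) ∈ span F (Set.range colsN) :=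
                      Submodule.subset_span ⟨(g, i), rfl⟩
                    have h2 : colsN (g, i) = cols (g, i) := by
                      simp only [hcolsN, hgG, if_true]
                    rw [h2] at h1
                    exact le_sup_left (α := Submodule F (Fin (h * l) → F)) h1
                  have := hxann _ hcolmem
                  simpa [hy, hcols, hPe] using this
              · -- e₂ ∈ T : the column lies in the rack span ≤ W
                funext i
                have hcolmem : (Matrix.of fun ρ (gi : Fin u × Fin l) =>
                    P ρ ((e₂, gi.1), gi.2)).transpose (g, i) ∈ W := by
                  have h1 : (Matrix.of fun ρ (gi : Fin u × Fin l) =>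
                      P ρ ((e₂, gi.1), gi.2)).transpose (g, i) ∈ span F (Set.range
                      (Matrix.of fun ρ (gi : Fin u × Fin l) => P ρ ((e₂, gi.1), gi.2)).transpose) :=
                    Submodule.subset_span ⟨(g, i), rfl⟩
                  have h2 : span F (Set.range
                      (Matrix.of fun ρ (gi : Fin u × Fin l) => P ρ ((e₂, gi.1), gi.2)).transpose)
                      ≤ W := by
                    rw [hW]
                    refine le_trans ?_ le_sup_right
                    exact le_iSup₂ (f := fun e'' (_ : e'' ∈ T) => span F (Set.range
                      (Matrix.of fun ρ (gi : Fin u × Fin l) =>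
                        P ρ ((e'', gi.1), gi.2)).transpose)) e₂ he₂T
                  exact h2 h1
                have := hxann _ hcolmem
                simpa [hy] using this
            · -- e₂ ∉ R, e₂ ≠ e' : P vanishes
              funext i
              simp only [hy]
              refine Finset.sum_eq_zero (fun ρ _ => ?_)
              rw [hzero e₂ he₂R he₂ne' ρ g i, mul_zero]
        -- y is a dual codeword with small support, hence zero
        have hy0 : y = 0 := hsupport y hyC S hScard hysupp
        -- contradiction with hleft
        apply hxne
        apply hleft
        intro b i
        have := congrFun (congrFun hy0 (e', g' b)) i
        simpa [hy] using this
      -- with the spans equal, bound the rank by the accessed columns in Gt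
      have h1 : ρe = finrank F (span F (Set.range colsN)) := by
        rw [hfullrank, hspan]
      have h2 : finrank F (span F (Set.range colsN)) ≤ st.card := by
        apply aux_finrank_span_range_le colsN st
        intro gi hgi
        rw [hst, Finset.mem_filter] at hgi
        push_neg at hgi
        by_cases hg : gi.1 ∈ Gt
        · have hgiAe : gi ∉ Ae := fun hmem => absurd (hgi hmem) (by simp [hg])
          have hcols0 : cols gi = 0 := by
            funext ρ
            rw [hAe, Finset.mem_filter] at hgiAe
            push_neg at hgiAe
            have := hgiAe (Finset.mem_univ gi) ρ
            simpa [hcols, hPe] using this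
          simp only [hcolsN, hg, if_true, hcols0]
        · simp only [hcolsN, hg, if_false]
      have h3 : st.card = (Ae.filter (fun gi : Fin u × Fin l =>
          ¬ ((((gi.1 : ℕ) : ZMod u) - ((t : ℕ) : ZMod u)).val < v))).card := by
        congr 1
        rw [hst]
        refine Finset.filter_congr (fun gi _ => ?_)
        rw [hGt]
        simp [Finset.mem_filter]
      omega
    -- sum the window inequality over all t
    have hcount : ∀ g : Fin u, (Finset.univ.filter (fun t : Fin u =>
        ¬ ((((g : ℕ) : ZMod u) - ((t : ℕ) : ZMod u)).val < v))).card = u - v := by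
      intro g
      have hpos := Finset.card_filter_add_card_filter_not
        (s := (Finset.univ : Finset (Fin u)))
        (p := fun t : Fin u => (((g : ℕ) : ZMod u) - ((t : ℕ) : ZMod u)).val < v)
      have hcv : (Finset.univ.filter (fun t : Fin u =>
          (((g : ℕ) : ZMod u) - ((t : ℕ) : ZMod u)).val < v)).card = v := by
        apply aux_card_window (by omega) hv
        intro t₁ t₂ ht
        have h1 : ((t₁ : ℕ) : ZMod u) = ((t₂ : ℕ) : ZMod u) := sub_right_inj.mp ht
        have hval := congrArg ZMod.val h1
        rw [ZMod.val_cast_of_lt t₁.isLt, ZMod.val_cast_of_lt t₂.isLt] at hval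
        exact Fin.ext hval
      rw [Finset.card_univ, Fintype.card_fin] at hpos
      omega
    have hsum : ∑ t : Fin u, (Ae.filter (fun gi : Fin u × Fin l =>
        ¬ ((((gi.1 : ℕ) : ZMod u) - ((t : ℕ) : ZMod u)).val < v))).card
        = (u - v) * Ae.card := by
      have : ∀ t : Fin u, (Ae.filter (fun gi : Fin u × Fin l =>
          ¬ ((((gi.1 : ℕ) : ZMod u) - ((t : ℕ) : ZMod u)).val < v))).card
          = ∑ gi ∈ Ae, if ¬ ((((gi.1 : ℕ) : ZMod u) - ((t : ℕ) : ZMod u)).val < v)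
            then 1 else 0 := fun t => Finset.card_filter _ _
      rw [Finset.sum_congr rfl (fun t _ => this t), Finset.sum_comm]
      have hinner : ∀ gi ∈ Ae, ∑ t : Fin u,
          (if ¬ ((((gi.1 : ℕ) : ZMod u) - ((t : ℕ) : ZMod u)).val < v)
            then (1 : ℕ) else 0) = u - v := by
        intro gi _
        rw [← Finset.card_filter]
        exact hcount gi.1
      rw [Finset.sum_congr rfl hinner, Finset.sum_const, smul_eq_mul, mul_comm]
    have huρe : u * ρe ≤ (u - v) * Ae.card := by
      calc u * ρe = ∑ _t : Fin u, ρe := by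
            rw [Finset.sum_const, Finset.card_univ, Fintype.card_fin, smul_eq_mul]
        _ ≤ ∑ t : Fin u, (Ae.filter (fun gi : Fin u × Fin l =>
            ¬ ((((gi.1 : ℕ) : ZMod u) - ((t : ℕ) : ZMod u)).val < v))).card :=
            Finset.sum_le_sum (fun t _ => hwindow t)
        _ = (u - v) * Ae.card := hsum
    calc u * (h * l) = u * (sb * ρe) := by rw [hρe]
      _ = sb * (u * ρe) := by ring
      _ ≤ sb * ((u - v) * Ae.card) := Nat.mul_le_mul_left sb huρe
      _ = sb * (u - v) * Ae.card := by ring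
  -- STEP D : sum over the helper racks
  calc h * (db * (u * l)) = db * (u * (h * l)) := by ring
    _ = ∑ _e ∈ R, u * (h * l) := by rw [Finset.sum_const, hR, smul_eq_mul]
    _ ≤ ∑ e ∈ R, sb * (u - v) *
        (Finset.univ.filter (fun gi : Fin u × Fin l =>
          ∃ ρ, P ρ ((e, gi.1), gi.2) ≠ 0)).card := Finset.sum_le_sum hmain
    _ = sb * (u - v) * ∑ e ∈ R, (Finset.univ.filter (fun gi : Fin u × Fin l =>
          ∃ ρ, P ρ ((e, gi.1), gi.2) ≠ 0)).card := by rw [Finset.mul_sum]
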